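/- (Theorem 3) Let H be a finite-dimensional real Hilbert space and let A, B, C be self-adjoint positive definite linear operators on H. Let a₁,…,a_m > 0, b₁,…,b_m > 0, τ > 0, and σ ≥ 1/2. Suppose sequences y : ℕ → H, y₁,…,y_m : ℕ → H and φ : ℕ → H satisfy, for all n ≥ 0 (writing y^{n+σ} = σ y^{n+1} + (1−σ) y^n and similarly for y_i): (B + Σ_{i=1}^m (a_i/b_i) C) (y^{n+1} − y^n)/τ − Σ_{i=1}^m (a_i/b_i) C (y_i^{n+1} − y_i^n)/τ + A y^{n+σ} = φ^n, and (y_i^{n+1} − y_i^n)/τ + b_i y_i^{n+σ} − (y^{n+1} − y^n)/τ = 0 for each i, with y^0 = u₀ and y_i^0 = 0 for each i. Then for all n ≥ 0: ⟪A y^{n+1}, y^{n+1}⟫ + Σ_{i=1}^m a_i ⟪C y_i^{n+1}, y_i^{n+1}⟫ ≤ ⟪A u₀, u₀⟫ + (1/2) Σ_{k=0}^{n} τ ⟪B⁻¹ φ^k, φ^k⟫. -/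

import Mathlib

open scoped RealInnerProductSpace

lemma pd_nonneg {H : Type*} [NormedAddCommGroup H] [InnerProductSpace ℝ H]
    {D : H →ₗ[ℝ] H} (hpd : ∃ ν > (0:ℝ), ∀ x : H, ν * ‖x‖ ^ 2 ≤ ⟪D x, x⟫) (x : H) :
    0 ≤ ⟪D x, x⟫ := by
  obtain ⟨ν, hν, h⟩ := hpd
  exact le_trans (by positivity) (h x)

lemma quad_id {H : Type*} [NormedAddCommGroup H] [InnerProductSpace ℝ H]
    {D : H →ₗ[ℝ] H} (hD : ∀ x y : H, ⟪D x, y⟫ = ⟪x, D y⟫)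
    (σ τ : ℝ) (hτ : τ ≠ 0) (p q : H) :
    2 * τ * ⟪D (σ • q + (1 - σ) • p), τ⁻¹ • (q - p)⟫
      = ⟪D q, q⟫ - ⟪D p, p⟫
        + (2 * σ - 1) * τ ^ 2 * ⟪D (τ⁻¹ • (q - p)), τ⁻¹ • (q - p)⟫ := by
  have hpq : ⟪D p, q⟫ = ⟪D q, p⟫ := by rw [hD, real_inner_comm]
  simp only [map_add, map_sub, map_smul, inner_add_left, inner_sub_left,
    inner_add_right, inner_sub_right, real_inner_smul_left, real_inner_smul_right,
    smul_eq_mul]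
  field_simp
  linear_combination hpq

lemma cauchyB {H : Type*} [NormedAddCommGroup H] [InnerProductSpace ℝ H]
    {B Binv : H →ₗ[ℝ] H} (hBsa : ∀ x y : H, ⟪B x, y⟫ = ⟪x, B y⟫)
    (hBpd : ∃ ν > (0:ℝ), ∀ x : H, ν * ‖x‖ ^ 2 ≤ ⟪B x, x⟫)
    (hBinv₁ : ∀ x : H, B (Binv x) = x) (φ v : H) :
    ⟪φ, v⟫ ≤ ⟪B v, v⟫ + (1/4) * ⟪Binv φ, φ⟫ := by
  have h0 : 0 ≤ ⟪B (v - (1/2 : ℝ) • Binv φ), v - (1/2 : ℝ) • Binv φ⟫ := pd_nonneg hBpd _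
  simp only [map_sub, map_smul, inner_sub_left, inner_sub_right,
    real_inner_smul_left, real_inner_smul_right, hBinv₁, smul_eq_mul] at h0
  have e1 : ⟪B v, Binv φ⟫ = ⟪φ, v⟫ := by
    rw [hBsa, hBinv₁, real_inner_comm]
  have e2 : ⟪φ, Binv φ⟫ = ⟪Binv φ, φ⟫ := real_inner_comm _ _
  linarith

lemma step_lemma {H : Type*} [NormedAddCommGroup H] [InnerProductSpace ℝ H]
    (A B C Binv : H →ₗ[ℝ] H)
    (hApd : ∃ ν > (0:ℝ), ∀ x : H, ν * ‖x‖ ^ 2 ≤ ⟪A x, x⟫)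
    (hBsa : ∀ x y : H, ⟪B x, y⟫ = ⟪x, B y⟫)
    (hBpd : ∃ ν > (0:ℝ), ∀ x : H, ν * ‖x‖ ^ 2 ≤ ⟪B x, x⟫)
    (hCpd : ∃ ν > (0:ℝ), ∀ x : H, ν * ‖x‖ ^ 2 ≤ ⟪C x, x⟫)
    (hBinv₁ : ∀ x : H, B (Binv x) = x)
    {m : ℕ} (a b : Fin m → ℝ) (ha : ∀ i, 0 < a i) (hb : ∀ i, 0 < b i)
    (τ : ℝ) (hτ : 0 < τ) (σ : ℝ) (hσ : 1 / 2 ≤ σ)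
    (u u' : H) (ui ui' : Fin m → H) (φ : H)
    (v s : H) (vv ss : Fin m → H)
    (key : B v + A s + ∑ i, a i • C (ss i) = φ)
    (hrel : ∀ i, v = vv i + b i • ss i)
    (hA2 : 2 * τ * ⟪A s, v⟫
      = ⟪A u', u'⟫ - ⟪A u, u⟫ + (2 * σ - 1) * τ ^ 2 * ⟪A v, v⟫)
    (hC2 : ∀ i, 2 * τ * ⟪C (ss i), vv i⟫
      = ⟪C (ui' i), ui' i⟫ - ⟪C (ui i), ui i⟫
        + (2 * σ - 1) * τ ^ 2 * ⟪C (vv i), vv i⟫) :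
    ⟪A u', u'⟫ + ∑ i, a i * ⟪C (ui' i), ui' i⟫
      ≤ ⟪A u, u⟫ + ∑ i, a i * ⟪C (ui i), ui i⟫ + τ / 2 * ⟪Binv φ, φ⟫ := by
  have hip : ⟪B v, v⟫ + ⟪A s, v⟫ + ∑ i, a i * ⟪C (ss i), v⟫ = ⟪φ, v⟫ := by
    rw [← key]
    simp [inner_add_left, sum_inner, real_inner_smul_left]
  have hterm : ∀ i ∈ Finset.univ, 2 * τ * (a i * ⟪C (ss i), v⟫)
      = a i * ⟪C (ui' i), ui' i⟫ - a i * ⟪C (ui i), ui i⟫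
        + (2 * σ - 1) * τ ^ 2 * (a i * ⟪C (vv i), vv i⟫)
        + 2 * τ * (a i * (b i * ⟪C (ss i), ss i⟫)) := by
    intro i _
    have hsplit : ⟪C (ss i), v⟫ = ⟪C (ss i), vv i⟫ + b i * ⟪C (ss i), ss i⟫ := by
      rw [hrel i, inner_add_right, real_inner_smul_right]
    rw [hsplit]
    linear_combination a i * hC2 i
  have hsum : 2 * τ * ∑ i, a i * ⟪C (ss i), v⟫
      = (∑ i, a i * ⟪C (ui' i), ui' i⟫) - (∑ i, a i * ⟪C (ui i), ui i⟫)
        + (2 * σ - 1) * τ ^ 2 * (∑ i, a i * ⟪C (vv i), vv i⟫)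
        + 2 * τ * (∑ i, a i * (b i * ⟪C (ss i), ss i⟫)) := by
    rw [Finset.mul_sum, Finset.sum_congr rfl hterm]
    simp [Finset.sum_add_distrib, Finset.sum_sub_distrib, Finset.mul_sum]
  have hR1 : 0 ≤ ⟪A v, v⟫ := pd_nonneg hApd v
  have hR2 : 0 ≤ ∑ i, a i * ⟪C (vv i), vv i⟫ :=
    Finset.sum_nonneg fun i _ => mul_nonneg (ha i).le (pd_nonneg hCpd _)
  have hR3 : 0 ≤ ∑ i, a i * (b i * ⟪C (ss i), ss i⟫) :=
    Finset.sum_nonneg fun i _ =>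
      mul_nonneg (ha i).le (mul_nonneg (hb i).le (pd_nonneg hCpd _))
  have hF : ⟪φ, v⟫ ≤ ⟪B v, v⟫ + (1/4) * ⟪Binv φ, φ⟫ := cauchyB hBsa hBpd hBinv₁ φ v
  have hF2 : 2 * τ * ⟪φ, v⟫ ≤ 2 * τ * ⟪B v, v⟫ + τ / 2 * ⟪Binv φ, φ⟫ := by nlinarith
  have hexp : (⟪A u', u'⟫ - ⟪A u, u⟫ + (2 * σ - 1) * τ ^ 2 * ⟪A v, v⟫)
      + ((∑ i, a i * ⟪C (ui' i), ui' i⟫) - (∑ i, a i * ⟪C (ui i), ui i⟫)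
        + (2 * σ - 1) * τ ^ 2 * (∑ i, a i * ⟪C (vv i), vv i⟫)
        + 2 * τ * (∑ i, a i * (b i * ⟪C (ss i), ss i⟫)))
      = 2 * τ * ⟪φ, v⟫ - 2 * τ * ⟪B v, v⟫ := by
    linear_combination 2 * τ * hip - hA2 - hsum
  have n1 : 0 ≤ (2 * σ - 1) * τ ^ 2 * ⟪A v, v⟫ :=
    mul_nonneg (mul_nonneg (by linarith) (sq_nonneg τ)) hR1
  have n2 : 0 ≤ (2 * σ - 1) * τ ^ 2 * (∑ i, a i * ⟪C (vv i), vv i⟫) :=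
    mul_nonneg (mul_nonneg (by linarith) (sq_nonneg τ)) hR2
  have n3 : 0 ≤ 2 * τ * (∑ i, a i * (b i * ⟪C (ss i), ss i⟫)) :=
    mul_nonneg (by linarith) hR3
  linarith

/-- **Theorem 3.** Unconditional stability of the two-level scheme with
weight `σ ≥ 1/2`: the a priori estimate
`‖yⁿ⁺¹‖²_A + Σᵢ aᵢ ‖yᵢⁿ⁺¹‖²_C ≤ ‖u₀‖²_A + (1/2) Σₖ τ ‖φᵏ‖²_{B⁻¹}`. -/
theorem stability_two_level_scheme
    {H : Type*} [NormedAddCommGroup H] [InnerProductSpace ℝ H] [FiniteDimensional ℝ H]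
    (A B C Binv : H →ₗ[ℝ] H)
    (hAsa : ∀ x y : H, ⟪A x, y⟫ = ⟪x, A y⟫)
    (hBsa : ∀ x y : H, ⟪B x, y⟫ = ⟪x, B y⟫)
    (hCsa : ∀ x y : H, ⟪C x, y⟫ = ⟪x, C y⟫)
    (hApd : ∃ ν > (0:ℝ), ∀ x : H, ν * ‖x‖ ^ 2 ≤ ⟪A x, x⟫)
    (hBpd : ∃ ν > (0:ℝ), ∀ x : H, ν * ‖x‖ ^ 2 ≤ ⟪B x, x⟫)
    (hCpd : ∃ ν > (0:ℝ), ∀ x : H, ν * ‖x‖ ^ 2 ≤ ⟪C x, x⟫)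
    (hBinv₁ : ∀ x : H, B (Binv x) = x)
    (hBinv₂ : ∀ x : H, Binv (B x) = x)
    (m : ℕ) (a b : Fin m → ℝ) (ha : ∀ i, 0 < a i) (hb : ∀ i, 0 < b i)
    (τ : ℝ) (hτ : 0 < τ) (σ : ℝ) (hσ : 1 / 2 ≤ σ)
    (y : ℕ → H) (yi : Fin m → ℕ → H) (φ : ℕ → H)
    (u₀ : H) (hy0 : y 0 = u₀) (hyi0 : ∀ i, yi i 0 = 0)
    (heq : ∀ n : ℕ,
      (τ⁻¹ • (B (y (n + 1) - y n) + ∑ i, (a i / b i) • C (y (n + 1) - y n)))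
        - (τ⁻¹ • ∑ i, (a i / b i) • C (yi i (n + 1) - yi i n))
        + A (σ • y (n + 1) + (1 - σ) • y n) = φ n)
    (heqi : ∀ i, ∀ n : ℕ,
      τ⁻¹ • (yi i (n + 1) - yi i n) + b i • (σ • yi i (n + 1) + (1 - σ) • yi i n)
        - τ⁻¹ • (y (n + 1) - y n) = 0) :
    ∀ n : ℕ,
      ⟪A (y (n + 1)), y (n + 1)⟫ + (∑ i, a i * ⟪C (yi i (n + 1)), yi i (n + 1)⟫)
        ≤ ⟪A u₀, u₀⟫
          + (1 / 2) * ∑ k ∈ Finset.range (n + 1), τ * ⟪Binv (φ k), φ k⟫ := by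
  have hrel : ∀ (n : ℕ) (i : Fin m), τ⁻¹ • (y (n+1) - y n)
      = τ⁻¹ • (yi i (n+1) - yi i n) + b i • (σ • yi i (n+1) + (1-σ) • yi i n) :=
    fun n i => (sub_eq_zero.mp (heqi i n)).symm
  have key : ∀ n : ℕ, B (τ⁻¹ • (y (n+1) - y n)) + A (σ • y (n+1) + (1-σ) • y n)
      + ∑ i, a i • C (σ • yi i (n+1) + (1-σ) • yi i n) = φ n := by
    intro n
    rw [← heq n]
    have h0 : ∀ i ∈ Finset.univ, τ⁻¹ • ((a i / b i) • C (y (n+1) - y n))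
        = (a i / b i) • (τ⁻¹ • C (y (n+1) - y n)) := fun i _ => smul_comm _ _ _
    have h1 : ∀ i ∈ Finset.univ, τ⁻¹ • ((a i / b i) • C (yi i (n+1) - yi i n))
        = (a i / b i) • (τ⁻¹ • C (y (n+1) - y n))
          - a i • C (σ • yi i (n+1) + (1-σ) • yi i n) := by
      intro i _
      have hsub : τ⁻¹ • (yi i (n+1) - yi i n)
          = τ⁻¹ • (y (n+1) - y n) - b i • (σ • yi i (n+1) + (1-σ) • yi i n) :=
        eq_sub_of_add_eq (hrel n i).symm
      have h2 : τ⁻¹ • C (yi i (n+1) - yi i n)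
          = τ⁻¹ • C (y (n+1) - y n)
            - b i • C (σ • yi i (n+1) + (1-σ) • yi i n) := by
        rw [← map_smul, hsub, map_sub, map_smul, map_smul]
      rw [smul_comm, h2, smul_sub, smul_smul, smul_smul,
        div_mul_cancel₀ _ (hb i).ne', mul_smul]
    rw [smul_add, Finset.smul_sum, Finset.smul_sum, Finset.sum_congr rfl h0,
      Finset.sum_congr rfl h1, Finset.sum_sub_distrib, map_smul]
    abel
  have hstep : ∀ n : ℕ,
      ⟪A (y (n+1)), y (n+1)⟫ + ∑ i, a i * ⟪C (yi i (n+1)), yi i (n+1)⟫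
        ≤ ⟪A (y n), y n⟫ + ∑ i, a i * ⟪C (yi i n), yi i n⟫
          + τ / 2 * ⟪Binv (φ n), φ n⟫ := by
    intro n
    exact step_lemma A B C Binv hApd hBsa hBpd hCpd hBinv₁ a b ha hb τ hτ σ hσ
      (y n) (y (n+1)) (fun i => yi i n) (fun i => yi i (n+1)) (φ n)
      (τ⁻¹ • (y (n+1) - y n)) (σ • y (n+1) + (1-σ) • y n)
      (fun i => τ⁻¹ • (yi i (n+1) - yi i n))
      (fun i => σ • yi i (n+1) + (1-σ) • yi i n)
      (key n) (hrel n)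
      (quad_id hAsa σ τ hτ.ne' (y n) (y (n+1)))
      (fun i => quad_id hCsa σ τ hτ.ne' (yi i n) (yi i (n+1)))
  intro n
  induction n with
  | zero =>
      have h := hstep 0
      simp only [hy0, hyi0, map_zero, inner_zero_left, mul_zero,
        Finset.sum_const_zero, add_zero] at h
      rw [Finset.sum_range_one]
      linarith
  | succ n ih =>
      have h := hstep (n+1)
      rw [Finset.sum_range_succ]
      linarith
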